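/- The general solution of the ODE y''''(α) = 2·(1 − 3α(1−α))/(α²(1−α)²)·y''(α) on (0,1) is spanned by the four linearly independent functions: 1, α, 1 − (1−α)ln(1−α) − α ln α, and (3/10)α⁵ − (3/4)α⁴ + (1/6)α³ + (1/2)α² − (1−α)ln(1−α) + 1 − α; in particular each of these four functions satisfies the ODE. -/

import Mathlib

open Real Set

noncomputable def sol1 : ℝ → ℝ := fun _ => 1
noncomputable def sol2 : ℝ → ℝ := fun α => α
noncomputable def sol3 : ℝ → ℝ := fun α => 1 - (1 - α) * Real.log (1 - α) - α * Real.log α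
noncomputable def sol4 : ℝ → ℝ := fun α =>
  3 / 10 * α ^ 5 - 3 / 4 * α ^ 4 + 1 / 6 * α ^ 3 + 1 / 2 * α ^ 2
    - (1 - α) * Real.log (1 - α) + 1 - α

lemma myDerivCongr {f g : ℝ → ℝ} (h : ∀ x ∈ Ioo (0:ℝ) 1, f x = g x)
    {α : ℝ} (hα : α ∈ Ioo (0:ℝ) 1) : deriv f α = deriv g α :=
  Filter.EventuallyEq.deriv_eq (Filter.eventually_of_mem (isOpen_Ioo.mem_nhds hα) h)

lemma iter_key {f g1 g2 g3 g4 : ℝ → ℝ}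
    (h1 : ∀ x ∈ Ioo (0:ℝ) 1, HasDerivAt f (g1 x) x)
    (h2 : ∀ x ∈ Ioo (0:ℝ) 1, HasDerivAt g1 (g2 x) x)
    (h3 : ∀ x ∈ Ioo (0:ℝ) 1, HasDerivAt g2 (g3 x) x)
    (h4 : ∀ x ∈ Ioo (0:ℝ) 1, HasDerivAt g3 (g4 x) x)
    {α : ℝ} (hα : α ∈ Ioo (0:ℝ) 1) :
    iteratedDeriv 2 f α = g2 α ∧ iteratedDeriv 4 f α = g4 α := by
  have e1 : ∀ x ∈ Ioo (0:ℝ) 1, deriv f x = g1 x := fun x hx => (h1 x hx).deriv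
  have e2 : ∀ x ∈ Ioo (0:ℝ) 1, deriv (deriv f) x = g2 x := fun x hx => by
    rw [myDerivCongr e1 hx]; exact (h2 x hx).deriv
  have e3 : ∀ x ∈ Ioo (0:ℝ) 1, deriv (deriv (deriv f)) x = g3 x := fun x hx => by
    rw [myDerivCongr e2 hx]; exact (h3 x hx).deriv
  have e4 : ∀ x ∈ Ioo (0:ℝ) 1, deriv (deriv (deriv (deriv f))) x = g4 x := fun x hx => by
    rw [myDerivCongr e3 hx]; exact (h4 x hx).deriv
  refine ⟨?_, ?_⟩
  · simpa [iteratedDeriv_succ, iteratedDeriv_zero] using e2 α hα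
  · simpa [iteratedDeriv_succ, iteratedDeriv_zero] using e4 α hα

-- sol3 chain
lemma sol3_keys {α : ℝ} (hα : α ∈ Ioo (0:ℝ) 1) :
    iteratedDeriv 2 sol3 α = (-(1-α)⁻¹ - α⁻¹) ∧
    iteratedDeriv 4 sol3 α = (-(2*((1-α)^3)⁻¹) - 2*(α^3)⁻¹) := by
  apply iter_key (g1 := fun x => Real.log (1-x) - Real.log x)
    (g2 := fun x => -(1-x)⁻¹ - x⁻¹)
    (g3 := fun x => -((1-x)^2)⁻¹ + (x^2)⁻¹)
    (g4 := fun x => -(2*((1-x)^3)⁻¹) - 2*(x^3)⁻¹) ?_ ?_ ?_ ?_ hα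
  all_goals intro x hx
  all_goals have hx0 : x ≠ 0 := ne_of_gt hx.1
  all_goals have hx1 : (1:ℝ) - x ≠ 0 := sub_ne_zero.mpr (ne_of_gt hx.2)
  all_goals have h1mx : HasDerivAt (fun y : ℝ => 1 - y) (-1) x := (hasDerivAt_id x).const_sub 1
  · have hlog1 : HasDerivAt (fun y : ℝ => Real.log (1-y)) (-1/(1-x)) x := h1mx.log hx1
    have H := ((h1mx.mul hlog1).const_sub 1).sub ((hasDerivAt_id x).mul (Real.hasDerivAt_log hx0))
    simp only [id_eq, Pi.pow_apply] at H
    convert H using 1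
    all_goals try rfl
    all_goals (field_simp; try ring)
  · have hlog1 : HasDerivAt (fun y : ℝ => Real.log (1-y)) (-1/(1-x)) x := h1mx.log hx1
    have H := hlog1.sub (Real.hasDerivAt_log hx0)
    convert H using 1
    all_goals try rfl
    all_goals (field_simp; try ring)
  · have H := ((h1mx.inv hx1).neg).sub ((hasDerivAt_id x).inv hx0)
    simp only [id_eq, Pi.pow_apply] at H
    convert H using 1
    all_goals try rfl
    all_goals (field_simp; try ring)
  · have H := (((h1mx.pow 2).inv (pow_ne_zero 2 hx1)).neg).add (((hasDerivAt_id x).pow 2).inv (pow_ne_zero 2 hx0))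
    simp only [id_eq, Pi.pow_apply] at H
    convert H using 1
    all_goals try rfl
    all_goals (field_simp; try ring)

-- sol4 chain
lemma sol4_keys {α : ℝ} (hα : α ∈ Ioo (0:ℝ) 1) :
    iteratedDeriv 2 sol4 α = (6*α^3 - 9*α^2 + α + 1 - (1-α)⁻¹) ∧
    iteratedDeriv 4 sol4 α = (36*α - 18 - 2*((1-α)^3)⁻¹) := by
  apply iter_key (g1 := fun x => 3/2*x^4 - 3*x^3 + 1/2*x^2 + x + Real.log (1-x))
    (g2 := fun x => 6*x^3 - 9*x^2 + x + 1 - (1-x)⁻¹)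
    (g3 := fun x => 18*x^2 - 18*x + 1 - ((1-x)^2)⁻¹)
    (g4 := fun x => 36*x - 18 - 2*((1-x)^3)⁻¹) ?_ ?_ ?_ ?_ hα
  all_goals intro x hx
  all_goals have hx0 : x ≠ 0 := ne_of_gt hx.1
  all_goals have hx1 : (1:ℝ) - x ≠ 0 := sub_ne_zero.mpr (ne_of_gt hx.2)
  all_goals have h1mx : HasDerivAt (fun y : ℝ => 1 - y) (-1) x := (hasDerivAt_id x).const_sub 1
  · have hlog1 : HasDerivAt (fun y : ℝ => Real.log (1-y)) (-1/(1-x)) x := h1mx.log hx1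
    have hp : HasDerivAt (fun y : ℝ => 3 / 10 * y ^ 5 - 3 / 4 * y ^ 4 + 1 / 6 * y ^ 3 + 1 / 2 * y ^ 2)
        (3/10*(5*x^4) - 3/4*(4*x^3) + 1/6*(3*x^2) + 1/2*(2*x)) x := by
      have h5 := (hasDerivAt_pow 5 x).const_mul (3/10 : ℝ)
      have h4 := (hasDerivAt_pow 4 x).const_mul (3/4 : ℝ)
      have h3 := (hasDerivAt_pow 3 x).const_mul (1/6 : ℝ)
      have h2 := (hasDerivAt_pow 2 x).const_mul (1/2 : ℝ)
      convert ((h5.sub h4).add h3).add h2 using 1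
      all_goals try rfl
      push_cast; ring
    have hlm : HasDerivAt (fun y : ℝ => (1-y) * Real.log (1-y)) ((-1)*Real.log (1-x) + (1-x)*(-1/(1-x))) x := h1mx.mul hlog1
    have H := (((hp.sub hlm).add_const 1).sub (hasDerivAt_id x))
    convert H using 1
    all_goals try rfl
    all_goals (field_simp; try ring)
  · have hlog1 : HasDerivAt (fun y : ℝ => Real.log (1-y)) (-1/(1-x)) x := h1mx.log hx1
    have h4 := (hasDerivAt_pow 4 x).const_mul (3/2 : ℝ)
    have h3 := (hasDerivAt_pow 3 x).const_mul (3 : ℝ)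
    have h2 := (hasDerivAt_pow 2 x).const_mul (1/2 : ℝ)
    have H := (((h4.sub h3).add h2).add (hasDerivAt_id x)).add hlog1
    convert H using 1
    all_goals try rfl
    all_goals (push_cast; field_simp; try ring)
  · have h3 := (hasDerivAt_pow 3 x).const_mul (6 : ℝ)
    have h2 := (hasDerivAt_pow 2 x).const_mul (9 : ℝ)
    have H := ((((h3.sub h2).add (hasDerivAt_id x)).add_const 1).sub (h1mx.inv hx1))
    convert H using 1
    all_goals try rfl
    all_goals (push_cast; field_simp; try ring)
  · have h2 := (hasDerivAt_pow 2 x).const_mul (18 : ℝ)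
    have H := (((h2.sub ((hasDerivAt_id x).const_mul 18)).add_const 1).sub ((h1mx.pow 2).inv (pow_ne_zero 2 hx1)))
    simp only [id_eq, Pi.pow_apply] at H
    convert H using 1
    all_goals try rfl
    all_goals (push_cast; field_simp; try ring)

lemma sol1_keys {α : ℝ} (hα : α ∈ Ioo (0:ℝ) 1) :
    iteratedDeriv 2 sol1 α = 0 ∧ iteratedDeriv 4 sol1 α = 0 :=
  iter_key (g1 := fun _ => 0) (g2 := fun _ => 0) (g3 := fun _ => 0) (g4 := fun _ => 0)
    (fun x _ => hasDerivAt_const x (1:ℝ)) (fun x _ => hasDerivAt_const x (0:ℝ))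
    (fun x _ => hasDerivAt_const x (0:ℝ)) (fun x _ => hasDerivAt_const x (0:ℝ)) hα

lemma sol2_keys {α : ℝ} (hα : α ∈ Ioo (0:ℝ) 1) :
    iteratedDeriv 2 sol2 α = 0 ∧ iteratedDeriv 4 sol2 α = 0 :=
  iter_key (g1 := fun _ => 1) (g2 := fun _ => 0) (g3 := fun _ => 0) (g4 := fun _ => 0)
    (fun x _ => hasDerivAt_id x) (fun x _ => hasDerivAt_const x (1:ℝ))
    (fun x _ => hasDerivAt_const x (0:ℝ)) (fun x _ => hasDerivAt_const x (0:ℝ)) hα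

/-- Each of the four functions `1`, `α`, `1 − (1−α)ln(1−α) − α ln α`, and
`(3/10)α⁵ − (3/4)α⁴ + (1/6)α³ + (1/2)α² − (1−α)ln(1−α) + 1 − α` satisfies the ODE
`y'''' = 2(1 − 3α(1−α))/(α²(1−α)²)·y''` on `(0,1)`, and they are linearly
independent. -/
theorem ode_general_solution :
    (∀ y ∈ ({sol1, sol2, sol3, sol4} : Set (ℝ → ℝ)), ∀ α ∈ Set.Ioo (0:ℝ) 1,
      iteratedDeriv 4 y α
        = 2 * (1 - 3 * α * (1 - α)) / (α ^ 2 * (1 - α) ^ 2) * iteratedDeriv 2 y α) ∧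
    LinearIndependent ℝ ![sol1, sol2, sol3, sol4] := by
  constructor
  · intro y hy α hα
    have hα0 : α ≠ 0 := ne_of_gt hα.1
    have hα1 : (1:ℝ) - α ≠ 0 := sub_ne_zero.mpr (ne_of_gt hα.2)
    rcases hy with h | h | h | h
    · obtain ⟨e2, e4⟩ := sol1_keys hα; rw [h, e2, e4]; ring
    · obtain ⟨e2, e4⟩ := sol2_keys hα; rw [h, e2, e4]; ring
    · obtain ⟨e2, e4⟩ := sol3_keys hα; rw [h, e2, e4]; field_simp; ring
    · rw [Set.mem_singleton_iff] at h
      obtain ⟨e2, e4⟩ := sol4_keys hα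
      rw [h, e2, e4]; field_simp; ring
  · rw [Fintype.linearIndependent_iff]
    intro g hg
    simp only [Fin.sum_univ_four, Matrix.cons_val_zero, Matrix.cons_val_one, Matrix.head_cons,
      Matrix.cons_val_two, Matrix.tail_cons, Matrix.cons_val_three] at hg
    set L := Real.log 2 with hLdef
    have hL : 0 < L := Real.log_pos one_lt_two
    have lm1 : Real.log (-1) = 0 := by
      rw [show ((-1):ℝ) = -(1:ℝ) by norm_num, Real.log_neg_eq_log, Real.log_one]
    have E0 := congrFun hg 0
    have E1 := congrFun hg 1
    have E2 := congrFun hg 2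
    have E3 := congrFun hg (-1)
    simp only [sol1, sol2, sol3, sol4, Pi.add_apply, Pi.smul_apply, Pi.zero_apply,
      smul_eq_mul] at E0 E1 E2 E3
    norm_num [Real.log_one, Real.log_zero, lm1, ← hLdef] at E0 E1 E2 E3
    have hd : g 3 = 4*L*g 2 := by linear_combination 2*E2 - 4*E1 + 2*E0
    have hB : g 3 + 4*L*g 2 + 4*L*g 3 = 0 := by linear_combination (-2)*E3 - 2*E1 + 4*E0
    have hprod : g 2 * (8*L + 16*L^2) = 0 := by linear_combination hB - (1 + 4*L)*hd
    have hc : g 2 = 0 := by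
      have hpos : (0:ℝ) < 8*L + 16*L^2 := by positivity
      exact (mul_eq_zero.mp hprod).resolve_right (ne_of_gt hpos)
    have hd0 : g 3 = 0 := by rw [hd, hc]; ring
    have hb : g 1 = 0 := by linarith
    have ha : g 0 = 0 := by linarith
    intro i
    fin_cases i <;> assumption
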